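/- Define V : ℝ² → ℝ⁴ by V(x, y) = (cos x, sin x, cos y, sin y). Let s₁ = (x₁, y₁) and s₂ = (x₂, y₂) be two distinct points of the square [0, π/2)², both different from (0, 0), and suppose it is not the case that both s₁ and s₂ lie on the diagonal line {(x, y) : y = x}. Then the three vectors V(0, 0), V(s₁), V(s₂) are linearly independent in ℝ⁴. -/
import Mathlib


/-- The vector `V(x, y) = (cos x, sin x, cos y, sin y) ∈ ℝ⁴`. -/
noncomputable def Vvec (x y : ℝ) : Fin 4 → ℝ :=
  ![Real.cos x, Real.sin x, Real.cos y, Real.sin y]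

private lemma sin_zero_of_Ico {x : ℝ} (h0 : 0 ≤ x) (h1 : x < Real.pi / 2)
    (hs : Real.sin x = 0) : x = 0 := by
  rcases h0.eq_or_lt with h | h
  · exact h.symm
  · exact absurd hs (ne_of_gt (Real.sin_pos_of_pos_of_lt_pi h
      (h1.trans (by linarith [Real.pi_pos]))))

private lemma sin_add_sin' (x y : ℝ) :
    Real.sin x + Real.sin y = 2 * Real.sin ((x + y) / 2) * Real.cos ((x - y) / 2) := by
  have h := Real.sin_sub_sin x (-y)
  simp only [Real.sin_neg, sub_neg_eq_add, ← sub_eq_add_neg] at h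
  linarith

/-- If `s₁ = (x₁, y₁)` and `s₂ = (x₂, y₂)` are distinct points of
`[0, π/2)²`, both nonzero, and not both on the diagonal `y = x`, then the vectors
`V(0,0)`, `V(s₁)`, `V(s₂)` are linearly independent in `ℝ⁴`. -/
theorem linearIndependent_Vvec (x₁ y₁ x₂ y₂ : ℝ)
    (hx₁ : x₁ ∈ Set.Ico 0 (Real.pi / 2)) (hy₁ : y₁ ∈ Set.Ico 0 (Real.pi / 2))
    (hx₂ : x₂ ∈ Set.Ico 0 (Real.pi / 2)) (hy₂ : y₂ ∈ Set.Ico 0 (Real.pi / 2))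
    (hdist : (x₁, y₁) ≠ (x₂, y₂))
    (hne₁ : (x₁, y₁) ≠ (0, 0)) (hne₂ : (x₂, y₂) ≠ (0, 0))
    (hdiag : ¬ (y₁ = x₁ ∧ y₂ = x₂)) :
    LinearIndependent ℝ ![Vvec 0 0, Vvec x₁ y₁, Vvec x₂ y₂] := by
  obtain ⟨hx₁0, hx₁1⟩ := hx₁
  obtain ⟨hy₁0, hy₁1⟩ := hy₁
  obtain ⟨hx₂0, hx₂1⟩ := hx₂
  obtain ⟨hy₂0, hy₂1⟩ := hy₂
  have hpi := Real.pi_pos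
  rw [Fintype.linearIndependent_iff]
  intro g hg
  simp only [Fin.sum_univ_three, Matrix.cons_val_zero, Matrix.cons_val_one, Matrix.head_cons,
    Matrix.cons_val_two, Matrix.tail_cons] at hg
  have E1 := congrFun hg 0
  have E2 := congrFun hg 1
  have E3 := congrFun hg 2
  have E4 := congrFun hg 3
  simp only [Vvec, Pi.add_apply, Pi.smul_apply, Matrix.cons_val_zero, Matrix.cons_val_one,
    Matrix.head_cons, Matrix.cons_val_two, Matrix.tail_cons, Matrix.cons_val_three,
    Real.cos_zero, Real.sin_zero, smul_eq_mul, Pi.zero_apply, mul_one, mul_zero,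
    add_zero, zero_add] at E1 E2 E3 E4
  obtain ⟨a, b, c, ha, hbg, hcg⟩ : ∃ a b c, g 0 = a ∧ g 1 = b ∧ g 2 = c := ⟨_, _, _, rfl, rfl, rfl⟩
  simp only [ha, hbg, hcg] at E1 E2 E3 E4
  suffices h : a = 0 ∧ b = 0 ∧ c = 0 by
    intro i; fin_cases i
    · exact ha.trans h.1
    · exact hbg.trans h.2.1
    · exact hcg.trans h.2.2
  rcases eq_or_ne b 0 with hb | hb
  · subst hb
    rcases eq_or_ne c 0 with hc | hc
    · subst hc; refine ⟨?_, rfl, rfl⟩; linarith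
    · exfalso
      simp only [zero_mul, zero_add] at E2 E4
      have hsx : Real.sin x₂ = 0 := by
        rcases mul_eq_zero.mp E2 with h | h
        · exact absurd h hc
        · exact h
      have hsy : Real.sin y₂ = 0 := by
        rcases mul_eq_zero.mp E4 with h | h
        · exact absurd h hc
        · exact h
      exact hne₂ (by rw [sin_zero_of_Ico hx₂0 hx₂1 hsx, sin_zero_of_Ico hy₂0 hy₂1 hsy])
  rcases eq_or_ne c 0 with hc | hc
  · exfalso
    subst hc
    simp only [mul_zero, zero_mul, add_zero] at E2 E4
    have hsx : Real.sin x₁ = 0 := by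
      rcases mul_eq_zero.mp E2 with h | h
      · exact absurd h hb
      · exact h
    have hsy : Real.sin y₁ = 0 := by
      rcases mul_eq_zero.mp E4 with h | h
      · exact absurd h hb
      · exact h
    exact hne₁ (by rw [sin_zero_of_Ico hx₁0 hx₁1 hsx, sin_zero_of_Ico hy₁0 hy₁1 hsy])
  exfalso
  -- main case : b ≠ 0, c ≠ 0
  obtain ⟨u₁, hu₁⟩ : ∃ u, u = (x₁ + y₁) / 2 := ⟨_, rfl⟩
  obtain ⟨v₁, hv₁⟩ : ∃ v, v = (x₁ - y₁) / 2 := ⟨_, rfl⟩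
  obtain ⟨u₂, hu₂⟩ : ∃ u, u = (x₂ + y₂) / 2 := ⟨_, rfl⟩
  obtain ⟨v₂, hv₂⟩ : ∃ v, v = (x₂ - y₂) / 2 := ⟨_, rfl⟩
  have hC1 := Real.cos_sub_cos x₁ y₁
  have hC2 := Real.cos_sub_cos x₂ y₂
  have hS1 := Real.sin_sub_sin x₁ y₁
  have hS2 := Real.sin_sub_sin x₂ y₂
  have hA1 := sin_add_sin' x₁ y₁
  have hA2 := sin_add_sin' x₂ y₂
  rw [← hu₁, ← hv₁] at hC1 hS1 hA1
  rw [← hu₂, ← hv₂] at hC2 hS2 hA2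
  have hps : (b * Real.sin v₁) * Real.sin u₁ + (c * Real.sin v₂) * Real.sin u₂ = 0 := by
    linear_combination (-1/2 : ℝ) * E1 + (1/2 : ℝ) * E3 + (b/2) * hC1 + (c/2) * hC2
  have hpc : (b * Real.sin v₁) * Real.cos u₁ + (c * Real.sin v₂) * Real.cos u₂ = 0 := by
    linear_combination (1/2 : ℝ) * E2 + (-1/2 : ℝ) * E4 + (-b/2) * hS1 + (-c/2) * hS2
  have hpyth1 := Real.sin_sq_add_cos_sq u₁
  have hpyth2 := Real.sin_sq_add_cos_sq u₂
  have hsq : (b * Real.sin v₁) ^ 2 = (c * Real.sin v₂) ^ 2 := by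
    linear_combination
      ((b * Real.sin v₁) * Real.sin u₁ - (c * Real.sin v₂) * Real.sin u₂) * hps +
      ((b * Real.sin v₁) * Real.cos u₁ - (c * Real.sin v₂) * Real.cos u₂) * hpc -
      (b * Real.sin v₁) ^ 2 * hpyth1 + (c * Real.sin v₂) ^ 2 * hpyth2
  rcases eq_or_ne (b * Real.sin v₁) 0 with hp | hp
  · -- p = 0, hence q = 0, hence both points on the diagonal
    have hq : c * Real.sin v₂ = 0 := by
      have : (c * Real.sin v₂) ^ 2 = 0 := by rw [← hsq, hp]; ring
      exact pow_eq_zero_iff (by norm_num) |>.mp this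
    have hv₁0 : Real.sin v₁ = 0 := by
      rcases mul_eq_zero.mp hp with h | h
      · exact absurd h hb
      · exact h
    have hv₂0 : Real.sin v₂ = 0 := by
      rcases mul_eq_zero.mp hq with h | h
      · exact absurd h hc
      · exact h
    have h1 : v₁ = 0 := by
      rw [Real.sin_eq_zero_iff_of_lt_of_lt (by rw [hv₁]; linarith) (by rw [hv₁]; linarith)] at hv₁0
      exact hv₁0
    have h2 : v₂ = 0 := by
      rw [Real.sin_eq_zero_iff_of_lt_of_lt (by rw [hv₂]; linarith) (by rw [hv₂]; linarith)] at hv₂0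
      exact hv₂0
    rw [hv₁] at h1; rw [hv₂] at h2
    exact hdiag ⟨by linarith, by linarith⟩
  · -- p ≠ 0, so q ≠ 0 and p = -q, u₁ = u₂
    have hq : c * Real.sin v₂ ≠ 0 := by
      intro h
      apply hp
      have : (b * Real.sin v₁) ^ 2 = 0 := by rw [hsq, h]; ring
      exact pow_eq_zero_iff (by norm_num) |>.mp this
    have hcu₁ : 0 < Real.cos u₁ :=
      Real.cos_pos_of_mem_Ioo ⟨by rw [hu₁]; linarith, by rw [hu₁]; linarith⟩
    have hcu₂ : 0 < Real.cos u₂ :=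
      Real.cos_pos_of_mem_Ioo ⟨by rw [hu₂]; linarith, by rw [hu₂]; linarith⟩
    have hfac : (b * Real.sin v₁ - c * Real.sin v₂) * (b * Real.sin v₁ + c * Real.sin v₂) = 0 := by
      linear_combination hsq
    have hpq : b * Real.sin v₁ + c * Real.sin v₂ = 0 := by
      rcases mul_eq_zero.mp hfac with h | h
      · -- p = q : contradiction since cos u₁, cos u₂ > 0
        exfalso
        have heq : b * Real.sin v₁ = c * Real.sin v₂ := by linarith
        have : (b * Real.sin v₁) * (Real.cos u₁ + Real.cos u₂) = 0 := by
          rw [heq] at hpc ⊢; linarith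
        rcases mul_eq_zero.mp this with h' | h'
        · exact hp h'
        · linarith
      · exact h
    have hcc : Real.cos u₁ = Real.cos u₂ := by
      have h' : (b * Real.sin v₁) * (Real.cos u₁ - Real.cos u₂) = 0 := by
        have : c * Real.sin v₂ = -(b * Real.sin v₁) := by linarith
        rw [this] at hpc; linarith [hpc]
      rcases mul_eq_zero.mp h' with h | h
      · exact absurd h hp
      · linarith
    have huu : u₁ = u₂ :=
      Real.injOn_cos ⟨by rw [hu₁]; linarith, by rw [hu₁]; linarith⟩
        ⟨by rw [hu₂]; linarith, by rw [hu₂]; linarith⟩ hcc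
    have hsu : Real.sin u₁ ≠ 0 := by
      intro h
      have hu0 : u₁ = 0 := by
        rw [Real.sin_eq_zero_iff_of_lt_of_lt (by rw [hu₁]; linarith) (by rw [hu₁]; linarith)] at h
        exact h
      rw [hu₁] at hu0
      have hx0 : x₁ = 0 := by linarith
      have hy0 : y₁ = 0 := by linarith
      apply hp
      rw [hv₁, hx0, hy0]
      norm_num
    rw [← huu] at hA2
    have hkey : b * Real.cos v₁ + c * Real.cos v₂ = 0 := by
      have h24 : Real.sin u₁ * (2 * (b * Real.cos v₁ + c * Real.cos v₂)) = 0 := by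
        linear_combination E2 + E4 - b * hA1 - c * hA2
      rcases mul_eq_zero.mp h24 with h | h
      · exact absurd h hsu
      · linarith
    have hpyth3 := Real.sin_sq_add_cos_sq v₁
    have hpyth4 := Real.sin_sq_add_cos_sq v₂
    have hbc : (b - c) * (b + c) = 0 := by
      linear_combination
        (b * Real.sin v₁ - c * Real.sin v₂) * hpq + (b * Real.cos v₁ - c * Real.cos v₂) * hkey -
        b ^ 2 * hpyth3 + c ^ 2 * hpyth4
    have hcv₁ : 0 < Real.cos v₁ :=
      Real.cos_pos_of_mem_Ioo ⟨by rw [hv₁]; linarith, by rw [hv₁]; linarith⟩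
    have hcv₂ : 0 < Real.cos v₂ :=
      Real.cos_pos_of_mem_Ioo ⟨by rw [hv₂]; linarith, by rw [hv₂]; linarith⟩
    have hbceq : c = -b := by
      rcases mul_eq_zero.mp hbc with h | h
      · -- b = c : contradiction since cos v₁, cos v₂ > 0
        exfalso
        have heq : b = c := by linarith
        have : b * (Real.cos v₁ + Real.cos v₂) = 0 := by rw [heq] at hkey ⊢; linarith
        rcases mul_eq_zero.mp this with h' | h'
        · rw [heq] at h'; exact hc h'
        · linarith
      · linarith
    have hvv : v₁ = v₂ := by
      have hsv : Real.sin v₁ = Real.sin v₂ := by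
        rw [hbceq] at hpq
        have : b * (Real.sin v₁ - Real.sin v₂) = 0 := by linarith
        rcases mul_eq_zero.mp this with h | h
        · exact absurd h hb
        · linarith
      exact Real.injOn_sin ⟨by rw [hv₁]; linarith, by rw [hv₁]; linarith⟩
        ⟨by rw [hv₂]; linarith, by rw [hv₂]; linarith⟩ hsv
    apply hdist
    rw [hu₁, hu₂] at huu; rw [hv₁, hv₂] at hvv
    have hxx : x₁ = x₂ := by linarith
    have hyy : y₁ = y₂ := by linarith
    rw [hxx, hyy]
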